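/- Let f be a continuous positive monotone density on ℝ, let E ∈ {−∞, +∞} be the end at which f attains its infimum, and set f(E) = lim_{x→E} f(x) = inf f. Assume f is not integrable on any neighborhood of E. Then for every V > 0 the infimum of P(U) over all open sets U ⊆ ℝ with vol(U) = V equals 2 f(E); moreover, there is a sequence of bounded open intervals of weighted volume V going off to E whose weighted perimeters converge to 2 f(E). -/

import Mathlib

open Filter MeasureTheory Set
open Topology

/-- Weighted volume of a set `Ω ⊆ ℝ` with respect to the density `f`. -/
noncomputable def wvol (f : ℝ → ℝ) (Ω : Set ℝ) : ENNReal :=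
  ∫⁻ x in Ω, ENNReal.ofReal (f x)

/-- Weighted perimeter of a set `Ω ⊆ ℝ`: the sum of `f` over the topological
boundary of `Ω`. -/
noncomputable def wper (f : ℝ → ℝ) (Ω : Set ℝ) : ENNReal :=
  ∑' x : frontier Ω, ENNReal.ofReal (f x)

lemma wper_Ioo (f : ℝ → ℝ) {a b : ℝ} (hab : a < b) :
    wper f (Set.Ioo a b) = ENNReal.ofReal (f a) + ENNReal.ofReal (f b) := by
  have h2 : ({a, b} : Set ℝ) = (({a, b} : Finset ℝ) : Set ℝ) := by simp
  rw [wper, frontier_Ioo hab, h2]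
  rw [Finset.tsum_subtype' ({a, b} : Finset ℝ) (fun y => ENNReal.ofReal (f y)),
    Finset.sum_pair hab.ne]

lemma wvol_Ioo (f : ℝ → ℝ) (hcont : Continuous f) (hpos : ∀ x, 0 < f x) {a b : ℝ} (hab : a ≤ b) :
    wvol f (Set.Ioo a b) = ENNReal.ofReal (∫ x in a..b, f x) := by
  have hfi : IntegrableOn f (Set.Ioo a b) := (hcont.integrableOn_Icc).mono_set Set.Ioo_subset_Icc_self
  rw [wvol, ← ofReal_integral_eq_lintegral_ofReal hfi
    (Eventually.of_forall (fun x => (hpos x).le)),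
    intervalIntegral.integral_of_le hab, integral_Ioc_eq_integral_Ioo]

lemma lintegral_top_of_not_integrableOn (f : ℝ → ℝ) (hcont : Continuous f)
    (hpos : ∀ x, 0 < f x) {s : Set ℝ} (h : ¬ IntegrableOn f s) :
    wvol f s = ⊤ := by
  by_contra hne
  apply h
  refine ⟨hcont.aestronglyMeasurable.restrict, ?_⟩
  rw [HasFiniteIntegral]
  have : ∀ x, (‖f x‖ₑ : ENNReal) = ENNReal.ofReal (f x) := fun x =>
    Real.enorm_eq_ofReal (hpos x).le
  simp_rw [this]
  exact lt_top_iff_ne_top.2 hne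

lemma lintegral_top_of_lb (f : ℝ → ℝ) (hcont : Continuous f) {c : ℝ} (hc : 0 < c) {s : Set ℝ}
    (hsm : MeasurableSet s) (hle : ∀ x ∈ s, c ≤ f x) (hs : volume s = ⊤) :
    wvol f s = ⊤ := by
  have h1 : ENNReal.ofReal c * volume s ≤ wvol f s := by
    rw [← setLIntegral_const s (ENNReal.ofReal c)]
    exact setLIntegral_mono (ENNReal.measurable_ofReal.comp hcont.measurable) (fun x hx => ENNReal.ofReal_le_ofReal (hle x hx))
  rw [hs, ENNReal.mul_top (ENNReal.ofReal_pos.2 hc).ne', top_le_iff] at h1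
  · exact h1

lemma lower_bound (f : ℝ → ℝ) (hpos : ∀ x, 0 < f x)
    (hIic : ∀ t : ℝ, wvol f (Set.Iic t) = ⊤) (hIci : ∀ t : ℝ, wvol f (Set.Ici t) = ⊤)
    {V : ℝ} (hV : 0 < V) {U : Set ℝ} (hU : IsOpen U) (hvol : wvol f U = ENNReal.ofReal V) :
    ENNReal.ofReal (2 * ⨅ x : ℝ, f x) ≤ wper f U := by
  have hbdd : BddBelow (Set.range f) := ⟨0, fun y ⟨x, hx⟩ => hx ▸ (hpos x).le⟩
  have hm0 : 0 ≤ ⨅ x : ℝ, f x := le_ciInf fun x => (hpos x).le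
  have hUne : U.Nonempty := by
    by_contra h
    rw [not_nonempty_iff_eq_empty] at h
    rw [h] at hvol
    simp only [wvol, Measure.restrict_empty, lintegral_zero_measure] at hvol
    exact (ENNReal.ofReal_pos.2 hV).ne' hvol.symm
  obtain ⟨u, hu⟩ := hUne
  have hfin : wvol f U ≠ ⊤ := by rw [hvol]; exact ENNReal.ofReal_ne_top
  have hne1 : (Uᶜ ∩ Set.Ici u).Nonempty := by
    by_contra h
    rw [not_nonempty_iff_eq_empty] at h
    have hsub : Set.Ici u ⊆ U := fun x hx => by
      by_contra hxU
      have hmem : x ∈ Uᶜ ∩ Set.Ici u := ⟨hxU, hx⟩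
      rw [h] at hmem
      exact hmem
    exact hfin (top_le_iff.1 ((hIci u) ▸ lintegral_mono_set hsub))
  have hne2 : (Uᶜ ∩ Set.Iic u).Nonempty := by
    by_contra h
    rw [not_nonempty_iff_eq_empty] at h
    have hsub : Set.Iic u ⊆ U := fun x hx => by
      by_contra hxU
      have hmem : x ∈ Uᶜ ∩ Set.Iic u := ⟨hxU, hx⟩
      rw [h] at hmem
      exact hmem
    exact hfin (top_le_iff.1 ((hIic u) ▸ lintegral_mono_set hsub))
  set b := sInf (Uᶜ ∩ Set.Ici u) with hbdef
  set a := sSup (Uᶜ ∩ Set.Iic u) with hadef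
  have hbmem : b ∈ Uᶜ ∩ Set.Ici u :=
    (hU.isClosed_compl.inter isClosed_Ici).csInf_mem hne1 ⟨u, fun y hy => hy.2⟩
  have hamem : a ∈ Uᶜ ∩ Set.Iic u :=
    (hU.isClosed_compl.inter isClosed_Iic).csSup_mem hne2 ⟨u, fun y hy => hy.2⟩
  have hub : u < b := (show u ≠ b from fun h => hbmem.1 (h ▸ hu)).lt_of_le hbmem.2
  have hau : a < u := (show a ≠ u from fun h => hamem.1 (h ▸ hu)).lt_of_le hamem.2
  have hab : a < b := hau.trans hub
  have hsub : Set.Ioo a b ⊆ U := by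
    intro x hx
    by_contra hxU
    have hBA : BddAbove (Uᶜ ∩ Set.Iic u) := ⟨u, fun y hy => hy.2⟩
    have hBB : BddBelow (Uᶜ ∩ Set.Ici u) := ⟨u, fun y hy => hy.2⟩
    rcases le_total x u with h | h
    · have hmem : x ∈ Uᶜ ∩ Set.Iic u := ⟨hxU, h⟩
      exact absurd (le_csSup hBA hmem) (not_le.2 hx.1)
    · have hmem : x ∈ Uᶜ ∩ Set.Ici u := ⟨hxU, h⟩
      exact absurd (csInf_le hBB hmem) (not_le.2 hx.2)
  have hcl : closure (Set.Ioo a b) ⊆ closure U := closure_mono hsub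
  have haf : a ∈ frontier U :=
    ⟨hcl (by rw [closure_Ioo hab.ne]; exact Set.left_mem_Icc.2 hab.le),
     by simpa [hU.interior_eq] using hamem.1⟩
  have hbf : b ∈ frontier U :=
    ⟨hcl (by rw [closure_Ioo hab.ne]; exact Set.right_mem_Icc.2 hab.le),
     by simpa [hU.interior_eq] using hbmem.1⟩
  have key : ENNReal.ofReal (f a) + ENNReal.ofReal (f b) ≤ wper f U := by
    have h := ENNReal.sum_le_tsum (f := fun x : frontier U => ENNReal.ofReal (f x))
      ({⟨a, haf⟩, ⟨b, hbf⟩} : Finset (frontier U))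
    rwa [Finset.sum_pair (fun h => hab.ne (Subtype.mk_eq_mk.1 h))] at h
  refine le_trans ?_ key
  rw [two_mul, ENNReal.ofReal_add hm0 hm0]
  exact add_le_add (ENNReal.ofReal_le_ofReal (ciInf_le hbdd a))
    (ENNReal.ofReal_le_ofReal (ciInf_le hbdd b))

lemma exists_left_endpoint (f : ℝ → ℝ) (hcont : Continuous f) (hpos : ∀ x, 0 < f x)
    (hIic : ∀ t : ℝ, wvol f (Set.Iic t) = ⊤) {V : ℝ} (hV : 0 < V) (t : ℝ) :
    ∃ a < t, (∫ x in a..t, f x) = V := by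
  set μ := volume.withDensity (fun x => ENNReal.ofReal (f x)) with hμ
  have hμs : ∀ s : Set ℝ, MeasurableSet s → μ s = wvol f s := fun s hs =>
    withDensity_apply _ hs
  have hmono : Monotone (fun n : ℕ => Set.Ioc (t - n) t) := fun n m hnm =>
    Set.Ioc_subset_Ioc (by simp [sub_le_sub_left (Nat.cast_le.2 hnm) t]) le_rfl
  have hunion : (⋃ n : ℕ, Set.Ioc (t - (n : ℝ)) t) = Set.Iic t := by
    ext x
    simp only [Set.mem_iUnion, Set.mem_Ioc, Set.mem_Iic]
    constructor
    · rintro ⟨n, _, h2⟩; exact h2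
    · intro hx
      obtain ⟨n, hn⟩ := exists_nat_gt (t - x)
      exact ⟨n, by linarith, hx⟩
  have htend : Tendsto (fun n : ℕ => μ (Set.Ioc (t - n) t)) atTop (𝓝 ⊤) := by
    have := tendsto_measure_iUnion_atTop (μ := μ) hmono
    rw [hunion] at this
    rwa [hμs _ measurableSet_Iic, hIic t] at this
  obtain ⟨n, hn⟩ := (htend.eventually_const_lt
    (show ENNReal.ofReal V < ⊤ from ENNReal.ofReal_lt_top)).exists
  have hint : IntegrableOn f (Set.Ioc (t - n) t) :=
    (hcont.integrableOn_Icc).mono_set Set.Ioc_subset_Icc_self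
  have hev : μ (Set.Ioc (t - n) t) = ENNReal.ofReal (∫ x in Set.Ioc (t - (n:ℝ)) t, f x) := by
    rw [hμs _ measurableSet_Ioc, wvol,
      ← ofReal_integral_eq_lintegral_ofReal hint (Eventually.of_forall fun x => (hpos x).le)]
  rw [hev] at hn
  have hVlt : V < ∫ x in Set.Ioc (t - (n:ℝ)) t, f x :=
    (ENNReal.ofReal_lt_ofReal_iff_of_nonneg hV.le).1 hn
  have ha0t : t - (n : ℝ) ≤ t := by
    by_contra h
    push_neg at h
    rw [Set.Ioc_eq_empty (by linarith)] at hVlt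
    simp at hVlt
    linarith
  set G : ℝ → ℝ := fun a => ∫ x in a..t, f x with hG
  have hGcont : Continuous G := by
    have h1 : Continuous (fun a => ∫ x in t..a, f x) :=
      intervalIntegral.continuous_primitive
        (fun a b => hcont.intervalIntegrable a b) t
    have : G = fun a => -(∫ x in t..a, f x) := by
      funext x; exact intervalIntegral.integral_symm t x
    rw [this]; exact h1.neg
  have hGa0 : V ≤ G (t - n) := by
    rw [hG]
    simp only
    rw [intervalIntegral.integral_of_le ha0t]
    exact hVlt.le
  have hmem : V ∈ Set.Icc (G t) (G (t - (n:ℝ))) := by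
    constructor
    · have h0 : G t = 0 := intervalIntegral.integral_same
      rw [h0]; exact hV.le
    · exact hGa0
  obtain ⟨a, ha, hGa⟩ := intermediate_value_Icc' ha0t hGcont.continuousOn hmem
  refine ⟨a, ?_, hGa⟩
  rcases eq_or_lt_of_le ha.2 with h | h
  · exfalso
    rw [h] at hGa
    have h0 : G t = 0 := intervalIntegral.integral_same
    rw [h0] at hGa
    linarith
  · exact h

lemma seq_mono (f : ℝ → ℝ) (hcont : Continuous f) (hpos : ∀ x, 0 < f x) (hmono : Monotone f)
    (hIic : ∀ t : ℝ, wvol f (Set.Iic t) = ⊤) {V : ℝ} (hV : 0 < V) :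
    ∃ a : ℕ → ℝ, (∀ k, a k < -(k:ℝ)) ∧ (∀ k, (∫ x in a k..(-(k:ℝ)), f x) = V) ∧
      Tendsto (fun k => ENNReal.ofReal (f (a k)) + ENNReal.ofReal (f (-(k:ℝ)))) atTop
        (𝓝 (ENNReal.ofReal (2 * ⨅ x : ℝ, f x))) := by
  choose a ha hint using fun k : ℕ => exists_left_endpoint f hcont hpos hIic hV (-(k:ℝ))
  refine ⟨a, ha, hint, ?_⟩
  have hbdd : BddBelow (Set.range f) := ⟨0, fun y ⟨x, hx⟩ => hx ▸ (hpos x).le⟩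
  have hm0 : 0 ≤ ⨅ x : ℝ, f x := le_ciInf fun x => (hpos x).le
  have hneg : Tendsto (fun k : ℕ => -(k:ℝ)) atTop atBot :=
    tendsto_neg_atBot_iff.2 tendsto_natCast_atTop_atTop
  have hfb : Tendsto (fun k : ℕ => f (-(k:ℝ))) atTop (𝓝 (⨅ x : ℝ, f x)) :=
    (tendsto_atBot_ciInf hmono hbdd).comp hneg
  have hfa : Tendsto (fun k : ℕ => f (a k)) atTop (𝓝 (⨅ x : ℝ, f x)) :=
    tendsto_of_tendsto_of_tendsto_of_le_of_le tendsto_const_nhds hfb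
      (fun k => ciInf_le hbdd (a k)) (fun k => hmono (ha k).le)
  have h := (ENNReal.tendsto_ofReal hfa).add (ENNReal.tendsto_ofReal hfb)
  rw [two_mul, ENNReal.ofReal_add hm0 hm0]
  exact h

lemma sInf_aux (f : ℝ → ℝ) (hpos : ∀ x, 0 < f x)
    (hIic : ∀ t : ℝ, wvol f (Set.Iic t) = ⊤) (hIci : ∀ t : ℝ, wvol f (Set.Ici t) = ⊤)
    {V : ℝ} (hV : 0 < V) {a b : ℕ → ℝ}
    (hwv : ∀ k, wvol f (Set.Ioo (a k) (b k)) = ENNReal.ofReal V)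
    (htend : Tendsto (fun k => wper f (Set.Ioo (a k) (b k))) atTop
      (𝓝 (ENNReal.ofReal (2 * ⨅ x : ℝ, f x)))) :
    sInf {p : ENNReal | ∃ U : Set ℝ, IsOpen U ∧ wvol f U = ENNReal.ofReal V ∧
        wper f U = p} = ENNReal.ofReal (2 * ⨅ x : ℝ, f x) := by
  apply le_antisymm
  · exact ge_of_tendsto' htend
      (fun k => sInf_le ⟨Set.Ioo (a k) (b k), isOpen_Ioo, hwv k, rfl⟩)
  · refine le_sInf ?_
    rintro p ⟨U, hUo, hUv, rfl⟩
    exact lower_bound f hpos hIic hIci hV hUo hUv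

/-- For a continuous positive monotone density on `ℝ` whose infimum
end `E` has infinite measure, the isoperimetric profile at any volume `V > 0` equals
`2 f(E) = 2 inf f`, and it is approached by a sequence of bounded intervals of weighted
volume `V` going off to `E`.  (`E = −∞` when `f` is nondecreasing, `E = +∞` when `f`
is nonincreasing; by monotonicity `f(E) = ⨅ x, f x`.) -/
theorem profile_eq_two_inf_of_monotone_infinite_end
    (f : ℝ → ℝ) (hcont : Continuous f) (hpos : ∀ x, 0 < f x)
    (V : ℝ) (hV : 0 < V) :
    (Monotone f → (∀ a : ℝ, ¬ IntegrableOn f (Set.Iic a)) →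
      sInf {p : ENNReal | ∃ U : Set ℝ, IsOpen U ∧ wvol f U = ENNReal.ofReal V ∧
          wper f U = p} = ENNReal.ofReal (2 * ⨅ x : ℝ, f x) ∧
      ∃ a b : ℕ → ℝ, (∀ k, a k < b k) ∧
        (∀ k, wvol f (Set.Ioo (a k) (b k)) = ENNReal.ofReal V) ∧
        Tendsto b atTop atBot ∧
        Tendsto (fun k => wper f (Set.Ioo (a k) (b k))) atTop
          (nhds (ENNReal.ofReal (2 * ⨅ x : ℝ, f x)))) ∧
    (Antitone f → (∀ a : ℝ, ¬ IntegrableOn f (Set.Ici a)) →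
      sInf {p : ENNReal | ∃ U : Set ℝ, IsOpen U ∧ wvol f U = ENNReal.ofReal V ∧
          wper f U = p} = ENNReal.ofReal (2 * ⨅ x : ℝ, f x) ∧
      ∃ a b : ℕ → ℝ, (∀ k, a k < b k) ∧
        (∀ k, wvol f (Set.Ioo (a k) (b k)) = ENNReal.ofReal V) ∧
        Tendsto a atTop atTop ∧
        Tendsto (fun k => wper f (Set.Ioo (a k) (b k))) atTop
          (nhds (ENNReal.ofReal (2 * ⨅ x : ℝ, f x)))) := by
  constructor
  · intro hmono hnint
    have hIic : ∀ t : ℝ, wvol f (Set.Iic t) = ⊤ := fun t =>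
      lintegral_top_of_not_integrableOn f hcont hpos (hnint t)
    have hIci : ∀ t : ℝ, wvol f (Set.Ici t) = ⊤ := fun t =>
      lintegral_top_of_lb f hcont (hpos t) measurableSet_Ici
        (fun x hx => hmono hx) (by simp)
    obtain ⟨a, ha, hint, htend⟩ := seq_mono f hcont hpos hmono hIic hV
    set b : ℕ → ℝ := fun k => -(k:ℝ) with hb
    have hab : ∀ k, a k < b k := ha
    have hwv : ∀ k, wvol f (Set.Ioo (a k) (b k)) = ENNReal.ofReal V := fun k => by
      rw [wvol_Ioo f hcont hpos (ha k).le, hint k]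
    have hwp : (fun k => wper f (Set.Ioo (a k) (b k))) =
        fun k => ENNReal.ofReal (f (a k)) + ENNReal.ofReal (f (b k)) :=
      funext fun k => wper_Ioo f (ha k)
    have htend' : Tendsto (fun k => wper f (Set.Ioo (a k) (b k))) atTop
        (𝓝 (ENNReal.ofReal (2 * ⨅ x : ℝ, f x))) := by rw [hwp]; exact htend
    exact ⟨sInf_aux f hpos hIic hIci hV hwv htend',
      a, b, hab, hwv, tendsto_neg_atBot_iff.2 tendsto_natCast_atTop_atTop, htend'⟩
  · intro hanti hnint
    set g : ℝ → ℝ := fun x => f (-x) with hg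
    have hgc : Continuous g := hcont.comp continuous_neg
    have hgpos : ∀ x, 0 < g x := fun x => hpos _
    have hgmono : Monotone g := fun x y hxy => hanti (neg_le_neg hxy)
    have hIci : ∀ t : ℝ, wvol f (Set.Ici t) = ⊤ := fun t =>
      lintegral_top_of_not_integrableOn f hcont hpos (hnint t)
    have hIic : ∀ t : ℝ, wvol f (Set.Iic t) = ⊤ := fun t =>
      lintegral_top_of_lb f hcont (hpos t) measurableSet_Iic
        (fun x hx => hanti hx) (by simp)
    have hgIic : ∀ t : ℝ, wvol g (Set.Iic t) = ⊤ := fun t => by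
      have h := (Measure.measurePreserving_neg (volume : Measure ℝ)).setLIntegral_comp_emb
        (Homeomorph.neg ℝ).measurableEmbedding (fun y => ENNReal.ofReal (f y)) (Set.Iic t)
      rw [wvol, show (∫⁻ x in Set.Iic t, ENNReal.ofReal (g x)) =
          ∫⁻ a in Set.Iic t, ENNReal.ofReal (f (-a)) from rfl, h, Set.image_neg_Iic]
      exact hIci (-t)
    have hginf : (⨅ x : ℝ, g x) = ⨅ x : ℝ, f x :=
      Function.Surjective.iInf_comp neg_surjective f
    obtain ⟨c, hc, hint, htend⟩ := seq_mono g hgc hgpos hgmono hgIic hV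
    set a : ℕ → ℝ := fun k => (k:ℝ) with hadef
    set b : ℕ → ℝ := fun k => -(c k) with hbdef
    have hab : ∀ k, a k < b k := fun k => by
      have := hc k; simp only [hadef, hbdef]; linarith
    have hwv : ∀ k, wvol f (Set.Ioo (a k) (b k)) = ENNReal.ofReal V := fun k => by
      rw [wvol_Ioo f hcont hpos (hab k).le]
      have h1 : (∫ x in (c k)..(-(k:ℝ)), g x) = ∫ x in (a k)..(b k), f x := by
        rw [hg]
        simp [hadef, hbdef]
      rw [← h1, hint k]
    have hwp : (fun k => wper f (Set.Ioo (a k) (b k))) =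
        fun k => ENNReal.ofReal (g (c k)) + ENNReal.ofReal (g (-(k:ℝ))) := by
      funext k
      rw [wper_Ioo f (hab k), add_comm]
      simp [hg, hadef, hbdef]
    have htend' : Tendsto (fun k => wper f (Set.Ioo (a k) (b k))) atTop
        (𝓝 (ENNReal.ofReal (2 * ⨅ x : ℝ, f x))) := by
      rw [hwp, ← hginf]; exact htend
    exact ⟨sInf_aux f hpos hIic hIci hV hwv htend',
      a, b, hab, hwv, tendsto_natCast_atTop_atTop, htend'⟩
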